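/- Let m, n ≥ 3. Every interior vertex of the grid graph P_m □ P_n (i.e., every vertex (i,j) with 1 < i < m and 1 < j < n) has nonpositive node resistance curvature: p_{(i,j)} ≤ 0. -/

import Mathlib

open Classical Matrix

/-- The four Penrose conditions characterizing the Moore–Penrose pseudoinverse
of a real square matrix. -/
def IsMoorePenroseInverse {V : Type*} [Fintype V] [DecidableEq V]
    (L P : Matrix V V ℝ) : Prop :=
  L * P * L = L ∧ P * L * P = P ∧ (L * P)ᵀ = L * P ∧ (P * L)ᵀ = P * L

/-- The Moore–Penrose pseudoinverse of a real square matrix. -/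
noncomputable def pinv {V : Type*} [Fintype V] [DecidableEq V]
    (L : Matrix V V ℝ) : Matrix V V ℝ :=
  if h : ∃ P, IsMoorePenroseInverse L P then h.choose else 0

/-- Effective resistance between `x` and `y` computed from a (weighted) Laplacian `L`. -/
noncomputable def effResM {V : Type*} [Fintype V] [DecidableEq V]
    (L : Matrix V V ℝ) (x y : V) : ℝ :=
  pinv L x x + pinv L y y - 2 * pinv L x y

/-- Effective resistance between vertices `x` and `y` of a simple graph `G`. -/
noncomputable def effRes {V : Type*} [Fintype V] [DecidableEq V]
    (G : SimpleGraph V) (x y : V) : ℝ :=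
  effResM (G.lapMatrix ℝ) x y

/-- The node resistance curvature `p_x = 1 - (1/2) ∑_{y ~ x} ω_{x,y}`. -/
noncomputable def curv {V : Type*} [Fintype V] [DecidableEq V]
    (G : SimpleGraph V) (x : V) : ℝ :=
  1 - (1/2) * ∑ y : V, if G.Adj x y then effRes G x y else 0

/-- The grid graph `P_m □ P_n` (vertex `(i,j)` of the paper corresponds to
`(⟨i-1⟩, ⟨j-1⟩) : Fin m × Fin n`). -/
def grid (m n : ℕ) : SimpleGraph (Fin m × Fin n) :=
  (SimpleGraph.pathGraph m).boxProd (SimpleGraph.pathGraph n)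

def torus (k : ℕ) : SimpleGraph (ZMod k × ZMod k) where
  Adj u v := u ≠ v ∧ (v - u = (1, 0) ∨ u - v = (1, 0) ∨ v - u = (0, 1) ∨ u - v = (0, 1))
  symm := by
    refine ⟨fun u v h => ?_⟩
    obtain ⟨h1, h2⟩ := h
    exact ⟨fun hc => h1 hc.symm, by tauto⟩
  loopless := by refine ⟨fun u h => ?_⟩; exact h.1 rfl

lemma torus_adj {k : ℕ} (u v : ZMod k × ZMod k) :
    (torus k).Adj u v ↔ u ≠ v ∧
      (v - u = (1, 0) ∨ u - v = (1, 0) ∨ v - u = (0, 1) ∨ u - v = (0, 1)) := Iff.rfl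

set_option linter.unusedSectionVars false
set_option linter.unusedVariables false
set_option maxHeartbeats 1000000

section MP
variable {V : Type*} [Fintype V] [DecidableEq V]

theorem mp_unique {L P Q : Matrix V V ℝ} (hP : IsMoorePenroseInverse L P)
    (hQ : IsMoorePenroseInverse L Q) : P = Q := by
  obtain ⟨hP1, hP2, hP3, hP4⟩ := hP
  obtain ⟨hQ1, hQ2, hQ3, hQ4⟩ := hQ
  have h3' : Pᵀ * Lᵀ = L * P := by rw [← transpose_mul]; exact hP3
  have h3q : Qᵀ * Lᵀ = L * Q := by rw [← transpose_mul]; exact hQ3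
  have h4q : Lᵀ * Qᵀ = Q * L := by rw [← transpose_mul]; exact hQ4
  have hq' : Lᵀ * (Qᵀ * Lᵀ) = Lᵀ := by
    have := congrArg Matrix.transpose hQ1
    simpa only [transpose_mul, mul_assoc] using this
  have hp'' : P * L * Lᵀ = Lᵀ := by
    calc P * L * Lᵀ = (P * L)ᵀ * Lᵀ := by rw [hP4]
    _ = Lᵀ := by
      rw [← transpose_mul]
      exact congrArg Matrix.transpose (by rw [← mul_assoc]; exact hP1)
  have e1 : P = P * L * Q := by
    calc P = P * L * P := hP2.symm
    _ = P * (Pᵀ * Lᵀ) := by rw [h3', ← mul_assoc]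
    _ = P * (Pᵀ * (Lᵀ * (Qᵀ * Lᵀ))) := by rw [hq']
    _ = P * ((Pᵀ * Lᵀ) * (Qᵀ * Lᵀ)) := by simp only [mul_assoc]
    _ = P * ((L * P) * (L * Q)) := by rw [h3', h3q]
    _ = (P * L * P) * (L * Q) := by simp only [mul_assoc]
    _ = P * (L * Q) := by rw [hP2]
    _ = P * L * Q := by rw [mul_assoc]
  have e2 : Q = P * L * Q := by
    calc Q = Q * L * Q := hQ2.symm
    _ = Lᵀ * Qᵀ * Q := by rw [h4q]
    _ = (P * L * Lᵀ) * Qᵀ * Q := by rw [hp'']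
    _ = (P * L) * ((Lᵀ * Qᵀ) * Q) := by simp only [mul_assoc]
    _ = (P * L) * (Q * L * Q) := by rw [h4q]
    _ = P * L * Q := by rw [hQ2]
  rw [e1, ← e2]

end MP



section K
variable (V : Type*) [Fintype V] [DecidableEq V]

noncomputable def Kc : Matrix V V ℝ := Matrix.of fun _ _ => (Fintype.card V : ℝ)⁻¹

variable {V} [Nonempty V]

lemma card_pos_real : (0:ℝ) < (Fintype.card V : ℝ) := by
  exact_mod_cast Fintype.card_pos

lemma Kc_apply (i j : V) : Kc V i j = (Fintype.card V : ℝ)⁻¹ := rfl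

lemma Kc_transpose : (Kc V)ᵀ = Kc V := rfl

lemma Kc_mul_Kc : Kc V * Kc V = Kc V := by
  ext i j
  simp only [mul_apply, Kc_apply, Finset.sum_const, Finset.card_univ, nsmul_eq_mul]
  rw [← mul_assoc, mul_inv_cancel₀ (card_pos_real (V := V)).ne']
  ring

lemma lap_rowsum (G : SimpleGraph V) [DecidableRel G.Adj] (i : V) :
    ∑ k, G.lapMatrix ℝ i k = 0 := by
  have := congrFun (G.lapMatrix_mulVec_const_eq_zero (R := ℝ)) i
  simpa [mulVec, dotProduct] using this

lemma lap_mul_Kc (G : SimpleGraph V) [DecidableRel G.Adj] :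
    G.lapMatrix ℝ * Kc V = 0 := by
  ext i j
  simp only [mul_apply, Kc_apply, Matrix.zero_apply, ← Finset.sum_mul]
  rw [lap_rowsum G i, zero_mul]

lemma Kc_mul_lap (G : SimpleGraph V) [DecidableRel G.Adj] :
    Kc V * G.lapMatrix ℝ = 0 := by
  have h := congrArg Matrix.transpose (lap_mul_Kc G)
  rwa [transpose_mul, Kc_transpose, (G.isSymm_lapMatrix (R := ℝ)).eq, transpose_zero] at h

lemma dot_Kc_mulVec (x : V → ℝ) :
    x ⬝ᵥ (Kc V *ᵥ x) = (∑ i, x i)^2 * (Fintype.card V : ℝ)⁻¹ := by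
  have hmv : ∀ i, (Kc V *ᵥ x) i = (Fintype.card V : ℝ)⁻¹ * ∑ j, x j := by
    intro i; simp [mulVec, dotProduct, Kc_apply, Finset.mul_sum]
  calc x ⬝ᵥ (Kc V *ᵥ x) = ∑ i, x i * ((Fintype.card V : ℝ)⁻¹ * ∑ j, x j) := by
        simp only [dotProduct, hmv]
  _ = _ := by rw [← Finset.sum_mul]; ring

lemma lap_add_Kc_posDef (G : SimpleGraph V) [DecidableRel G.Adj] (hG : G.Preconnected) :
    (G.lapMatrix ℝ + Kc V).PosDef := by
  refine posDef_iff_dotProduct_mulVec.mpr ⟨?_, ?_⟩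
  · have h1 : (G.lapMatrix ℝ).IsHermitian := (SimpleGraph.posSemidef_lapMatrix ℝ G).1
    have h2 : (Kc V).IsHermitian := by
      ext i j; simp [Matrix.conjTranspose_apply, Kc_apply]
    exact h1.add h2
  · intro x hx
    rw [star_trivial, add_mulVec, dotProduct_add]
    have hL : 0 ≤ x ⬝ᵥ (G.lapMatrix ℝ *ᵥ x) := by
      simpa using (SimpleGraph.posSemidef_lapMatrix ℝ G).dotProduct_mulVec_nonneg x
    have hK : 0 ≤ x ⬝ᵥ (Kc V *ᵥ x) := by
      rw [dot_Kc_mulVec]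
      positivity
    rcases lt_or_eq_of_le hL with h | h
    · linarith
    rcases lt_or_eq_of_le hK with h2 | h2
    · linarith
    · -- both zero: contradiction with x ≠ 0
      exfalso
      apply hx
      have hconst : ∀ i j, x i = x j := by
        intro i j
        have h0 : Matrix.toLinearMap₂' ℝ (G.lapMatrix ℝ) x x = 0 := by
          rw [Matrix.toLinearMap₂'_apply']; exact h.symm
        exact (G.lapMatrix_toLinearMap₂'_apply'_eq_zero_iff_forall_reachable x).mp h0 i j (hG i j)
      have hsum : (∑ i, x i) = 0 := by
        have h3 := h2.symm
        rw [dot_Kc_mulVec] at h3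
        have hsq : (∑ i, x i)^2 = 0 := by
          rcases mul_eq_zero.mp h3 with h' | h'
          · exact h'
          · exact absurd h' (inv_ne_zero (card_pos_real (V := V)).ne')
        exact pow_eq_zero_iff (by norm_num) |>.mp hsq
      obtain ⟨i0⟩ := ‹Nonempty V›
      have : ∀ i, x i = x i0 := fun i => hconst i i0

      have hsum2 : (∑ _i : V, x i0) = 0 := by
        rw [← hsum]; exact Finset.sum_congr rfl (fun i _ => (this i).symm)
      rw [Finset.sum_const, Finset.card_univ, nsmul_eq_mul] at hsum2
      have : x i0 = 0 := by
        rcases mul_eq_zero.mp hsum2 with h' | h'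
        · exact absurd h' (by exact_mod_cast (Fintype.card_pos (α := V)).ne')
        · exact h'
      funext i
      simp [hconst i i0, this]

end K


section Pinv
variable {V : Type*} [Fintype V] [DecidableEq V] [Nonempty V]
variable (G : SimpleGraph V) [DecidableRel G.Adj]


lemma lap_transpose : (G.lapMatrix ℝ)ᵀ = G.lapMatrix ℝ := (G.isSymm_lapMatrix (R := ℝ)).eq

noncomputable def Pm : Matrix V V ℝ := (G.lapMatrix ℝ + Kc V)⁻¹ - Kc V

lemma Q_det_isUnit (hG : G.Preconnected) : IsUnit (G.lapMatrix ℝ + Kc V).det :=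
  (Matrix.isUnit_iff_isUnit_det _).mp (lap_add_Kc_posDef G hG).isUnit

lemma Q_transpose : (G.lapMatrix ℝ + Kc V)ᵀ = G.lapMatrix ℝ + Kc V := by
  rw [transpose_add, lap_transpose, Kc_transpose]

lemma Qinv_mul_Kc (hG : G.Preconnected) : (G.lapMatrix ℝ + Kc V)⁻¹ * Kc V = Kc V := by
  have hQK : (G.lapMatrix ℝ + Kc V) * Kc V = Kc V := by
    rw [add_mul, lap_mul_Kc G, Kc_mul_Kc, zero_add]
  calc (G.lapMatrix ℝ + Kc V)⁻¹ * Kc V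
      = (G.lapMatrix ℝ + Kc V)⁻¹ * ((G.lapMatrix ℝ + Kc V) * Kc V) := by rw [hQK]
    _ = ((G.lapMatrix ℝ + Kc V)⁻¹ * (G.lapMatrix ℝ + Kc V)) * Kc V := by rw [mul_assoc]
    _ = Kc V := by rw [Matrix.nonsing_inv_mul _ (Q_det_isUnit G hG), one_mul]

lemma Kc_mul_Qinv (hG : G.Preconnected) : Kc V * (G.lapMatrix ℝ + Kc V)⁻¹ = Kc V := by
  have hKQ : Kc V * (G.lapMatrix ℝ + Kc V) = Kc V := by
    rw [mul_add, Kc_mul_lap G, Kc_mul_Kc, zero_add]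
  calc Kc V * (G.lapMatrix ℝ + Kc V)⁻¹
      = (Kc V * (G.lapMatrix ℝ + Kc V)) * (G.lapMatrix ℝ + Kc V)⁻¹ := by rw [hKQ]
    _ = Kc V * ((G.lapMatrix ℝ + Kc V) * (G.lapMatrix ℝ + Kc V)⁻¹) := by rw [mul_assoc]
    _ = Kc V := by rw [Matrix.mul_nonsing_inv _ (Q_det_isUnit G hG), mul_one]

lemma Kc_mul_Pm (hG : G.Preconnected) : Kc V * Pm G = 0 := by
  rw [Pm, mul_sub, Kc_mul_Qinv G hG, Kc_mul_Kc, sub_self]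

lemma Pm_mul_Kc (hG : G.Preconnected) : Pm G * Kc V = 0 := by
  rw [Pm, sub_mul, Qinv_mul_Kc G hG, Kc_mul_Kc, sub_self]

lemma lap_mul_Pm (hG : G.Preconnected) : G.lapMatrix ℝ * Pm G = 1 - Kc V := by
  have h0 : (G.lapMatrix ℝ + Kc V) * Pm G = G.lapMatrix ℝ * Pm G := by
    rw [add_mul, Kc_mul_Pm G hG, add_zero]
  rw [← h0, Pm, mul_sub, Matrix.mul_nonsing_inv _ (Q_det_isUnit G hG)]
  have h2 : (G.lapMatrix ℝ + Kc V) * Kc V = Kc V := by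
    rw [add_mul, lap_mul_Kc G, Kc_mul_Kc, zero_add]
  rw [h2]

lemma Pm_mul_lap (hG : G.Preconnected) : Pm G * G.lapMatrix ℝ = 1 - Kc V := by
  have h0 : Pm G * (G.lapMatrix ℝ + Kc V) = Pm G * G.lapMatrix ℝ := by
    rw [mul_add, Pm_mul_Kc G hG, add_zero]
  rw [← h0, Pm, sub_mul, Matrix.nonsing_inv_mul _ (Q_det_isUnit G hG)]
  have h2 : Kc V * (G.lapMatrix ℝ + Kc V) = Kc V := by
    rw [mul_add, Kc_mul_lap G, Kc_mul_Kc, zero_add]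
  rw [h2]

lemma Pm_transpose (hG : G.Preconnected) : (Pm G)ᵀ = Pm G := by
  rw [Pm, transpose_sub, Kc_transpose, Matrix.transpose_nonsing_inv, Q_transpose]

theorem isMP_Pm (hG : G.Preconnected) : IsMoorePenroseInverse (G.lapMatrix ℝ) (Pm G) := by
  have h1 : (1 - Kc V) * G.lapMatrix ℝ = G.lapMatrix ℝ := by
    rw [sub_mul, one_mul, Kc_mul_lap G, sub_zero]
  have h2 : (1 - Kc V) * Pm G = Pm G := by
    rw [sub_mul, one_mul, Kc_mul_Pm G hG, sub_zero]
  refine ⟨?_, ?_, ?_, ?_⟩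
  · rw [lap_mul_Pm G hG, h1]
  · rw [mul_assoc, ← mul_assoc, Pm_mul_lap G hG, h2]
  · rw [lap_mul_Pm G hG, transpose_sub, transpose_one, Kc_transpose]
  · rw [Pm_mul_lap G hG, transpose_sub, transpose_one, Kc_transpose]

theorem pinv_lap_eq (hG : G.Preconnected) : pinv (G.lapMatrix ℝ) = Pm G := by
  have hex : ∃ P, IsMoorePenroseInverse (G.lapMatrix ℝ) P := ⟨Pm G, isMP_Pm G hG⟩
  rw [pinv, dif_pos hex]
  exact mp_unique hex.choose_spec (isMP_Pm G hG)

lemma pinv_lap_mul (hG : G.Preconnected) : G.lapMatrix ℝ * pinv (G.lapMatrix ℝ) = 1 - Kc V := by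
  rw [pinv_lap_eq G hG]; exact lap_mul_Pm G hG

lemma pinv_lap_transpose (hG : G.Preconnected) : (pinv (G.lapMatrix ℝ))ᵀ = pinv (G.lapMatrix ℝ) := by
  rw [pinv_lap_eq G hG]; exact Pm_transpose G hG

theorem isMP_pinv_lap (hG : G.Preconnected) :
    IsMoorePenroseInverse (G.lapMatrix ℝ) (pinv (G.lapMatrix ℝ)) := by
  rw [pinv_lap_eq G hG]; exact isMP_Pm G hG

end Pinv


section Core
variable {V : Type*} [Fintype V] [DecidableEq V] [Nonempty V]

/-- the signed indicator vector of the pair (x,y) -/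
noncomputable def ev (x y : V) : V → ℝ :=
  fun z => (if z = x then 1 else 0) - (if z = y then 1 else 0)

lemma dot_ev (f : V → ℝ) (x y : V) : f ⬝ᵥ ev x y = f x - f y := by
  simp [ev, dotProduct, mul_sub, Finset.sum_sub_distrib, mul_ite, mul_one, mul_zero,
    Finset.sum_ite_eq', Finset.mem_univ]

lemma Kc_mulVec_ev (x y : V) : Kc V *ᵥ ev x y = 0 := by
  funext i
  simp only [mulVec, dotProduct, Kc, Matrix.of_apply, ev, Pi.zero_apply]
  rw [← Finset.mul_sum]
  simp [Finset.sum_sub_distrib]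

lemma dot_symm (L : Matrix V V ℝ) (hs : Lᵀ = L) (a b : V → ℝ) :
    a ⬝ᵥ (L *ᵥ b) = b ⬝ᵥ (L *ᵥ a) := by
  have h1 : a ⬝ᵥ (L *ᵥ b) = ∑ i, ∑ j, a i * (L i j * b j) := by
    simp [dotProduct, mulVec, Finset.mul_sum]
  have h2 : b ⬝ᵥ (L *ᵥ a) = ∑ j, ∑ i, b j * (L j i * a i) := by
    simp [dotProduct, mulVec, Finset.mul_sum]
  rw [h1, h2, Finset.sum_comm]
  apply Finset.sum_congr rfl; intro i _
  apply Finset.sum_congr rfl; intro j _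
  have he : L j i = L i j := by
    rw [← Matrix.transpose_apply L i j, hs]
  rw [he]; ring

lemma cs_ineq (L : Matrix V V ℝ) (hL : L.PosSemidef) (hs : Lᵀ = L) (f g : V → ℝ) :
    (f ⬝ᵥ (L *ᵥ g))^2 ≤ (f ⬝ᵥ (L *ᵥ f)) * (g ⬝ᵥ (L *ᵥ g)) := by
  have key : ∀ t : ℝ, 0 ≤ (g ⬝ᵥ (L *ᵥ g)) * (t * t) + (2 * (f ⬝ᵥ (L *ᵥ g))) * t
      + (f ⬝ᵥ (L *ᵥ f)) := by
    intro t
    have h0 := hL.dotProduct_mulVec_nonneg (f + t • g)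
    rw [star_trivial] at h0
    have hexp : (f + t • g) ⬝ᵥ (L *ᵥ (f + t • g)) = (g ⬝ᵥ (L *ᵥ g)) * (t * t)
        + (2 * (f ⬝ᵥ (L *ᵥ g))) * t + (f ⬝ᵥ (L *ᵥ f)) := by
      rw [mulVec_add, mulVec_smul, dotProduct_add, add_dotProduct, add_dotProduct,
        smul_dotProduct, smul_dotProduct, dotProduct_smul, dotProduct_smul,
        dot_symm L hs g f]
      simp only [smul_eq_mul]
      ring
    rw [hexp] at h0
    exact h0
  have hd := discrim_le_zero key
  rw [discrim] at hd
  nlinarith [hd]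

end Core


section ER
variable {V : Type*} [Fintype V] [DecidableEq V] [Nonempty V]

lemma lap_transpose' (G : SimpleGraph V) :
    (G.lapMatrix ℝ)ᵀ = G.lapMatrix ℝ := (G.isSymm_lapMatrix (R := ℝ)).eq

lemma drop_formula (G : SimpleGraph V) (hG : G.Preconnected)
    (f : V → ℝ) (x y : V) :
    f ⬝ᵥ (G.lapMatrix ℝ *ᵥ (pinv (G.lapMatrix ℝ) *ᵥ ev x y)) = f x - f y := by
  rw [mulVec_mulVec, pinv_lap_mul G hG, sub_mulVec, one_mulVec, Kc_mulVec_ev, sub_zero, dot_ev]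

lemma mulVec_ev_apply (P : Matrix V V ℝ) (z x y : V) :
    (P *ᵥ ev x y) z = P z x - P z y :=
  dot_ev (fun j => P z j) x y

lemma effRes_eq_energy (G : SimpleGraph V) (hG : G.Preconnected) (x y : V) :
    (pinv (G.lapMatrix ℝ) *ᵥ ev x y) ⬝ᵥ (G.lapMatrix ℝ *ᵥ (pinv (G.lapMatrix ℝ) *ᵥ ev x y))
      = effRes G x y := by
  rw [drop_formula G hG, mulVec_ev_apply, mulVec_ev_apply]
  have hsym : pinv (G.lapMatrix ℝ) y x = pinv (G.lapMatrix ℝ) x y := by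
    rw [← Matrix.transpose_apply (pinv (G.lapMatrix ℝ)) x y, pinv_lap_transpose G hG]
  rw [effRes, effResM, hsym]; ring

lemma effRes_nonneg (G : SimpleGraph V) (hG : G.Preconnected) (x y : V) :
    0 ≤ effRes G x y := by
  rw [← effRes_eq_energy G hG]
  simpa using (SimpleGraph.posSemidef_lapMatrix ℝ G).dotProduct_mulVec_nonneg (pinv (G.lapMatrix ℝ) *ᵥ ev x y)

lemma sq_drop_le (G : SimpleGraph V) (hG : G.Preconnected)
    (f : V → ℝ) (x y : V) :
    (f x - f y)^2 ≤ (f ⬝ᵥ (G.lapMatrix ℝ *ᵥ f)) * effRes G x y := by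
  have h := cs_ineq (G.lapMatrix ℝ) (SimpleGraph.posSemidef_lapMatrix ℝ G)
    (lap_transpose' G) f (pinv (G.lapMatrix ℝ) *ᵥ ev x y)
  rwa [drop_formula G hG, effRes_eq_energy G hG] at h

lemma energy_mono {W : Type*} [Fintype W] [DecidableEq W] [Nonempty W]
    (H : SimpleGraph W) (G : SimpleGraph V)
    (ι : W → V) (hinj : Function.Injective ι)
    (hadj : ∀ u v, H.Adj u v → G.Adj (ι u) (ι v)) (f : V → ℝ) :
    (f ∘ ι) ⬝ᵥ (H.lapMatrix ℝ *ᵥ (f ∘ ι)) ≤ f ⬝ᵥ (G.lapMatrix ℝ *ᵥ f) := by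
  rw [← Matrix.toLinearMap₂'_apply', ← Matrix.toLinearMap₂'_apply',
    SimpleGraph.lapMatrix_toLinearMap₂', SimpleGraph.lapMatrix_toLinearMap₂']
  have key : (∑ i : W, ∑ j : W, if H.Adj i j then ((f ∘ ι) i - (f ∘ ι) j)^2 else 0)
      ≤ ∑ i : V, ∑ j : V, if G.Adj i j then (f i - f j)^2 else 0 := by
    rw [← Finset.sum_product', ← Finset.sum_product']
    set F : V × V → ℝ := fun q => if G.Adj q.1 q.2 then (f q.1 - f q.2)^2 else 0 with hF
    have hFnonneg : ∀ q : V × V, 0 ≤ F q := by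
      intro q; simp only [hF]; split_ifs
      · positivity
      · exact le_rfl
    have step1 : (∑ p ∈ (Finset.univ ×ˢ Finset.univ : Finset (W × W)),
        if H.Adj p.1 p.2 then ((f ∘ ι) p.1 - (f ∘ ι) p.2)^2 else 0)
        ≤ ∑ p ∈ (Finset.univ ×ˢ Finset.univ : Finset (W × W)), F (ι p.1, ι p.2) := by
      apply Finset.sum_le_sum
      intro p _
      by_cases h : H.Adj p.1 p.2
      · rw [if_pos h]
        have hFe : F (ι p.1, ι p.2) = (f (ι p.1) - f (ι p.2))^2 := by
          simp only [hF]; rw [if_pos (hadj _ _ h)]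
        rw [hFe]
        simp [Function.comp]
      · rw [if_neg h]; exact hFnonneg _
    have step2 : (∑ p ∈ (Finset.univ ×ˢ Finset.univ : Finset (W × W)), F (ι p.1, ι p.2))
        ≤ ∑ q ∈ (Finset.univ ×ˢ Finset.univ : Finset (V × V)), F q := by
      have hiinj : Function.Injective (fun p : W × W => (ι p.1, ι p.2)) := by
        intro a b hab
        simp only [Prod.mk.injEq] at hab
        exact Prod.ext (hinj hab.1) (hinj hab.2)
      rw [show (∑ p ∈ (Finset.univ ×ˢ Finset.univ : Finset (W × W)), F (ι p.1, ι p.2))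
          = ∑ q ∈ (Finset.univ ×ˢ Finset.univ : Finset (W × W)).image
              (fun p : W × W => (ι p.1, ι p.2)), F q from
        (Finset.sum_image (fun a _ b _ hab => hiinj hab)).symm]
      apply Finset.sum_le_sum_of_subset_of_nonneg
      · intro q _; exact Finset.mem_product.mpr ⟨Finset.mem_univ _, Finset.mem_univ _⟩
      · intro q _ _
        exact hFnonneg q
    exact le_trans step1 step2
  linarith
end ER


section Mono
variable {V : Type*} [Fintype V] [DecidableEq V] [Nonempty V]

lemma effRes_mono {W : Type*} [Fintype W] [DecidableEq W] [Nonempty W]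
    (H : SimpleGraph W) (G : SimpleGraph V)
    (hH : H.Preconnected) (hG : G.Preconnected)
    (ι : W → V) (hinj : Function.Injective ι)
    (hadj : ∀ u v, H.Adj u v → G.Adj (ι u) (ι v)) (x y : W) :
    effRes G (ι x) (ι y) ≤ effRes H x y := by
  set g : V → ℝ := pinv (G.lapMatrix ℝ) *ᵥ ev (ι x) (ι y) with hg
  have hEg : g ⬝ᵥ (G.lapMatrix ℝ *ᵥ g) = effRes G (ι x) (ι y) := effRes_eq_energy G hG _ _
  have hdrop : g (ι x) - g (ι y) = effRes G (ι x) (ι y) := by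
    rw [← hEg, ← drop_formula G hG g (ι x) (ι y)]
  have h1 := sq_drop_le H hH (g ∘ ι) x y
  have h2 := energy_mono H G ι hinj hadj g
  rw [hEg] at h2
  have h3 : ((g ∘ ι) x - (g ∘ ι) y) = effRes G (ι x) (ι y) := hdrop
  rw [h3] at h1
  have hωH := effRes_nonneg H hH x y
  have hωG := effRes_nonneg G hG (ι x) (ι y)
  have h4 : effRes G (ι x) (ι y) ^ 2 ≤ effRes G (ι x) (ι y) * effRes H x y := by
    calc effRes G (ι x) (ι y) ^ 2
        ≤ ((g ∘ ι) ⬝ᵥ (H.lapMatrix ℝ *ᵥ (g ∘ ι))) * effRes H x y := h1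
      _ ≤ effRes G (ι x) (ι y) * effRes H x y := by
          apply mul_le_mul_of_nonneg_right h2 hωH
  rcases eq_or_lt_of_le hωG with h0 | h0
  · rw [← h0]; exact hωH
  · nlinarith [h4]

lemma effRes_symm (G : SimpleGraph V) [Nonempty V] (hG : G.Preconnected) (x y : V) :
    effRes G x y = effRes G y x := by
  have hsym : pinv (G.lapMatrix ℝ) y x = pinv (G.lapMatrix ℝ) x y := by
    rw [← Matrix.transpose_apply (pinv (G.lapMatrix ℝ)) x y, pinv_lap_transpose G hG]
  rw [effRes, effRes, effResM, effResM, hsym]; ring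

lemma isMP_submatrix {L P : Matrix V V ℝ} (σ : V ≃ V) (h : IsMoorePenroseInverse L P) :
    IsMoorePenroseInverse (L.submatrix σ σ) (P.submatrix σ σ) := by
  obtain ⟨h1, h2, h3, h4⟩ := h
  refine ⟨?_, ?_, ?_, ?_⟩
  · rw [Matrix.submatrix_mul_equiv, Matrix.submatrix_mul_equiv, h1]
  · rw [Matrix.submatrix_mul_equiv, Matrix.submatrix_mul_equiv, h2]
  · rw [Matrix.submatrix_mul_equiv, Matrix.transpose_submatrix, h3]
  · rw [Matrix.submatrix_mul_equiv, Matrix.transpose_submatrix, h4]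

lemma degree_iso (G : SimpleGraph V) (σ : V ≃ V)
    (hσ : ∀ u v, G.Adj (σ u) (σ v) ↔ G.Adj u v) (i : V) :
    (G.degree (σ i) : ℝ) = (G.degree i : ℝ) := by
  rw [SimpleGraph.degree_eq_sum_if_adj, SimpleGraph.degree_eq_sum_if_adj]
  rw [← Equiv.sum_comp σ (fun v => if G.Adj (σ i) v then (1:ℝ) else 0)]
  apply Finset.sum_congr rfl
  intro v _
  exact if_congr (hσ i v) rfl rfl

lemma lap_submatrix (G : SimpleGraph V) (σ : V ≃ V)
    (hσ : ∀ u v, G.Adj (σ u) (σ v) ↔ G.Adj u v) :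
    (G.lapMatrix ℝ).submatrix σ σ = G.lapMatrix ℝ := by
  ext i j
  simp only [Matrix.submatrix_apply, SimpleGraph.lapMatrix, Matrix.sub_apply,
    SimpleGraph.degMatrix, Matrix.diagonal_apply, SimpleGraph.adjMatrix_apply]
  congr 1
  · by_cases h : i = j
    · rw [if_pos h, if_pos (by rw [h]), h]
      exact degree_iso G σ hσ j
    · rw [if_neg h, if_neg (fun hc => h (σ.injective hc))]
  · exact if_congr (hσ i j) rfl rfl

lemma effRes_iso (G : SimpleGraph V) [Nonempty V] (hG : G.Preconnected) (σ : V ≃ V)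
    (hσ : ∀ u v, G.Adj (σ u) (σ v) ↔ G.Adj u v) (x y : V) :
    effRes G (σ x) (σ y) = effRes G x y := by
  have hmp := isMP_pinv_lap G hG
  have h2 : IsMoorePenroseInverse (G.lapMatrix ℝ) ((pinv (G.lapMatrix ℝ)).submatrix σ σ) := by
    have h := isMP_submatrix σ hmp
    rwa [lap_submatrix G σ hσ] at h
  have heq : (pinv (G.lapMatrix ℝ)).submatrix σ σ = pinv (G.lapMatrix ℝ) := mp_unique h2 hmp
  have e : ∀ a b, pinv (G.lapMatrix ℝ) (σ a) (σ b) = pinv (G.lapMatrix ℝ) a b := by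
    intro a b
    exact congrFun (congrFun heq a) b
  rw [effRes, effRes, effResM, effResM, e, e, e]

lemma trace_KC : Matrix.trace (Kc V) = 1 := by
  simp only [Matrix.trace, Matrix.diag, Kc, Matrix.of_apply, Finset.sum_const,
    Finset.card_univ, nsmul_eq_mul]
  rw [mul_inv_cancel₀]
  exact_mod_cast Fintype.card_pos.ne'

lemma foster (G : SimpleGraph V) [Nonempty V] (hG : G.Preconnected) :
    ∑ u : V, ∑ v : V, (if G.Adj u v then effRes G u v else 0)
      = 2 * ((Fintype.card V : ℝ) - 1) := by
  have htr : Matrix.trace (G.lapMatrix ℝ * pinv (G.lapMatrix ℝ)) = (Fintype.card V : ℝ) - 1 := by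
    rw [pinv_lap_mul G hG, Matrix.trace_sub, Matrix.trace_one, trace_KC]
  set P := pinv (G.lapMatrix ℝ) with hP
  have hPsym : ∀ a b, P b a = P a b := by
    intro a b
    rw [← Matrix.transpose_apply P a b, hP, pinv_lap_transpose G hG]
  have htr2 : Matrix.trace (G.lapMatrix ℝ * P)
      = (∑ u : V, (G.degree u : ℝ) * P u u) - ∑ u : V, ∑ v : V,
          (if G.Adj u v then P u v else 0) := by
    rw [Matrix.trace]
    rw [← Finset.sum_sub_distrib]
    apply Finset.sum_congr rfl
    intro u _
    simp only [Matrix.diag_apply, Matrix.mul_apply, SimpleGraph.lapMatrix, Matrix.sub_apply,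
      SimpleGraph.degMatrix, Matrix.diagonal_apply, SimpleGraph.adjMatrix_apply, sub_mul,
      ite_mul, one_mul, zero_mul]
    congr 1
    · rw [Finset.sum_ite_eq (Finset.univ : Finset V) u (fun k => (G.degree u : ℝ) * P k u)]
      simp [hPsym u u]
    · apply Finset.sum_congr rfl
      intro v _
      by_cases h : G.Adj u v
      · rw [if_pos h, if_pos h, hPsym u v]
      · rw [if_neg h, if_neg h]
  have hsplit : ∑ u : V, ∑ v : V, (if G.Adj u v then effRes G u v else 0)
      = (∑ u : V, ∑ v : V, (if G.Adj u v then P u u else 0))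
        + (∑ u : V, ∑ v : V, (if G.Adj u v then P v v else 0))
        - 2 * ∑ u : V, ∑ v : V, (if G.Adj u v then P u v else 0) := by
    rw [Finset.mul_sum, ← Finset.sum_add_distrib, ← Finset.sum_sub_distrib]
    apply Finset.sum_congr rfl
    intro u _
    rw [Finset.mul_sum, ← Finset.sum_add_distrib, ← Finset.sum_sub_distrib]
    apply Finset.sum_congr rfl
    intro v _
    by_cases h : G.Adj u v
    · simp only [if_pos h, effRes, effResM, ← hP]
    · simp [if_neg h]
  have hS1 : ∑ u : V, ∑ v : V, (if G.Adj u v then P u u else 0)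
      = ∑ u : V, (G.degree u : ℝ) * P u u := by
    apply Finset.sum_congr rfl
    intro u _
    rw [SimpleGraph.degree_eq_sum_if_adj, Finset.sum_mul]
    apply Finset.sum_congr rfl
    intro v _
    by_cases h : G.Adj u v
    · rw [if_pos h, if_pos h, one_mul]
    · rw [if_neg h, if_neg h, zero_mul]
  have hS2 : ∑ u : V, ∑ v : V, (if G.Adj u v then P v v else 0)
      = ∑ u : V, (G.degree u : ℝ) * P u u := by
    rw [Finset.sum_comm]
    apply Finset.sum_congr rfl
    intro v _
    rw [SimpleGraph.degree_eq_sum_if_adj, Finset.sum_mul]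
    apply Finset.sum_congr rfl
    intro u _
    by_cases h : G.Adj v u
    · rw [if_pos (G.adj_symm h), if_pos h, one_mul]
    · rw [if_neg (fun hc => h (G.adj_symm hc)), if_neg h, zero_mul]
  rw [hsplit, hS1, hS2, ← htr, htr2]
  ring
end Mono


section Torus

variable {k : ℕ} [NeZero k]

lemma zmod_one_ne_zero (hk : 3 ≤ k) : (1 : ZMod k) ≠ 0 := by
  have : ((1 : ℕ) : ZMod k) ≠ 0 := by
    rw [Ne, ZMod.natCast_eq_zero_iff]
    intro hdvd
    have := Nat.le_of_dvd one_pos hdvd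
    omega
  simpa using this

lemma zmod_two_ne_zero (hk : 3 ≤ k) : (2 : ZMod k) ≠ 0 := by
  have : ((2 : ℕ) : ZMod k) ≠ 0 := by
    rw [Ne, ZMod.natCast_eq_zero_iff]
    intro hdvd
    have := Nat.le_of_dvd two_pos hdvd
    omega
  simpa using this

lemma e1_ne_zero (hk : 3 ≤ k) : ((1, 0) : ZMod k × ZMod k) ≠ 0 := by
  intro h
  exact zmod_one_ne_zero hk (congrArg Prod.fst h)

lemma e2_ne_zero (hk : 3 ≤ k) : ((0, 1) : ZMod k × ZMod k) ≠ 0 := by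
  intro h
  exact zmod_one_ne_zero hk (congrArg Prod.snd h)

lemma torus_adj_add (hk : 3 ≤ k) (u : ZMod k × ZMod k) (e : ZMod k × ZMod k)
    (he : e = (1, 0) ∨ e = (0, 1)) : (torus k).Adj u (u + e) := by
  have hne : e ≠ 0 := by
    rcases he with h | h
    · rw [h]; exact e1_ne_zero hk
    · rw [h]; exact e2_ne_zero hk
  constructor
  · intro hc
    apply hne
    have : u + e - u = u - u := by rw [← hc]
    simpa using this
  · rcases he with h | h
    · left; rw [h]; abel
    · right; right; left; rw [h]; abel

lemma torus_reach_smul (hk : 3 ≤ k) (u : ZMod k × ZMod k) (e : ZMod k × ZMod k)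
    (he : e = (1, 0) ∨ e = (0, 1)) (n : ℕ) : (torus k).Reachable u (u + n • e) := by
  induction n with
  | zero => simpa using SimpleGraph.Reachable.refl u
  | succ n ih =>
    have hadj : (torus k).Adj (u + n • e) (u + n • e + e) := torus_adj_add hk _ e he
    have : u + (n + 1) • e = u + n • e + e := by rw [succ_nsmul]; abel
    rw [this]
    exact ih.trans hadj.reachable

lemma torus_preconnected (hk : 3 ≤ k) : (torus k).Preconnected := by
  intro u v
  set d := v - u with hd
  have h1 : (torus k).Reachable u (u + d.1.val • ((1 : ZMod k), (0 : ZMod k))) :=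
    torus_reach_smul hk u _ (Or.inl rfl) _
  have h2 : (torus k).Reachable (u + d.1.val • ((1 : ZMod k), (0 : ZMod k)))
      (u + d.1.val • ((1 : ZMod k), (0 : ZMod k)) + d.2.val • ((0 : ZMod k), (1 : ZMod k))) :=
    torus_reach_smul hk _ _ (Or.inr rfl) _
  have h3 : u + d.1.val • ((1 : ZMod k), (0 : ZMod k)) + d.2.val • ((0 : ZMod k), (1 : ZMod k)) = v := by
    have hv1 : (d.1.val • (1 : ZMod k) : ZMod k) = d.1 := by
      rw [nsmul_eq_mul, mul_one]
      exact ZMod.natCast_rightInverse d.1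
    have hv2 : (d.2.val • (1 : ZMod k) : ZMod k) = d.2 := by
      rw [nsmul_eq_mul, mul_one]
      exact ZMod.natCast_rightInverse d.2
    have : ∀ (n : ℕ) (a b : ZMod k), n • ((a, b) : ZMod k × ZMod k) = (n • a, n • b) := by
      intro n a b; rfl
    rw [this, this]
    apply Prod.ext
    · simp [hv1, hd]
    · simp [hv2, hd]
  rw [h3] at h2
  exact h1.trans h2

instance : Nonempty (ZMod k × ZMod k) := ⟨(0, 0)⟩

-- translation invariance
lemma torus_adj_translate (c u v : ZMod k × ZMod k) :
    (torus k).Adj (c + u) (c + v) ↔ (torus k).Adj u v := by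
  rw [torus_adj, torus_adj]
  have h1 : c + v - (c + u) = v - u := by abel
  have h2 : c + u - (c + v) = u - v := by abel
  rw [h1, h2]
  simp only [ne_eq, add_right_inj]

lemma torus_adj_swap (u v : ZMod k × ZMod k) :
    (torus k).Adj (u.2, u.1) (v.2, v.1) ↔ (torus k).Adj u v := by
  rw [torus_adj, torus_adj]
  constructor
  · rintro ⟨h1, h2⟩
    refine ⟨fun hc => h1 (by rw [hc]), ?_⟩
    simp only [Prod.mk_sub_mk, Prod.mk.injEq] at h2 ⊢
    rcases u with ⟨a, b⟩; rcases v with ⟨c, d⟩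
    simp only [Prod.mk_sub_mk, Prod.mk.injEq] at h2 ⊢
    tauto
  · rintro ⟨h1, h2⟩
    refine ⟨fun hc => h1 ?_, ?_⟩
    · rcases u with ⟨a, b⟩; rcases v with ⟨c, d⟩
      simp only [Prod.mk.injEq] at hc ⊢
      tauto
    · rcases u with ⟨a, b⟩; rcases v with ⟨c, d⟩
      simp only [Prod.mk_sub_mk, Prod.mk.injEq] at h2 ⊢
      tauto

lemma effRes_translate (hk : 3 ≤ k) (c u v : ZMod k × ZMod k) :
    effRes (torus k) (c + u) (c + v) = effRes (torus k) u v := by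
  have := effRes_iso (torus k) (torus_preconnected hk) (Equiv.addLeft c)
    (fun x y => torus_adj_translate c x y) u v
  simpa using this

lemma effRes_swap (hk : 3 ≤ k) (u v : ZMod k × ZMod k) :
    effRes (torus k) (u.2, u.1) (v.2, v.1) = effRes (torus k) u v := by
  have := effRes_iso (torus k) (torus_preconnected hk)
    (Equiv.prodComm (ZMod k) (ZMod k)) (fun x y => torus_adj_swap x y) u v
  exact this

lemma torus_edge_e1 (hk : 3 ≤ k) (u v : ZMod k × ZMod k) (h : v - u = (1, 0)) :
    effRes (torus k) u v = effRes (torus k) 0 (1, 0) := by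
  have h1 : effRes (torus k) (-u + u) (-u + v) = effRes (torus k) u v :=
    effRes_translate hk (-u) u v
  have h2 : -u + u = (0 : ZMod k × ZMod k) := by abel
  have h3 : -u + v = ((1, 0) : ZMod k × ZMod k) := by rw [← h]; abel
  rw [h2, h3] at h1
  exact h1.symm

lemma torus_edge_e2 (hk : 3 ≤ k) (u v : ZMod k × ZMod k) (h : v - u = (0, 1)) :
    effRes (torus k) u v = effRes (torus k) 0 (1, 0) := by
  have hs := effRes_swap hk u v
  rw [← hs]
  apply torus_edge_e1 hk
  rcases u with ⟨a, b⟩; rcases v with ⟨c, d⟩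
  simp only [Prod.mk_sub_mk, Prod.mk.injEq] at h ⊢
  tauto

lemma torus_edge_val (hk : 3 ≤ k) (u v : ZMod k × ZMod k) (h : (torus k).Adj u v) :
    effRes (torus k) u v = effRes (torus k) 0 (1, 0) := by
  obtain ⟨hne, hcase⟩ := h
  rcases hcase with h | h | h | h
  · exact torus_edge_e1 hk u v h
  · rw [effRes_symm (torus k) (torus_preconnected hk) u v]
    exact torus_edge_e1 hk v u h
  · exact torus_edge_e2 hk u v h
  · rw [effRes_symm (torus k) (torus_preconnected hk) u v]
    exact torus_edge_e2 hk v u h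

end Torus


section T2
variable {k : ℕ} [NeZero k]


lemma torus_adj_sub (hk : 3 ≤ k) (u : ZMod k × ZMod k) (e : ZMod k × ZMod k)
    (he : e = (1, 0) ∨ e = (0, 1)) : (torus k).Adj u (u - e) := by
  have h := torus_adj_add hk (u - e) e he
  have : u - e + e = u := by abel
  rw [this] at h
  exact h.symm

lemma torus_filter (hk : 3 ≤ k) (u : ZMod k × ZMod k) :
    Finset.univ.filter (fun v => (torus k).Adj u v)
      = {u + (1, 0), u - (1, 0), u + (0, 1), u - (0, 1)} := by
  ext v
  simp only [Finset.mem_filter, Finset.mem_univ, true_and, Finset.mem_insert,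
    Finset.mem_singleton]
  constructor
  · rintro ⟨hne, h | h | h | h⟩
    · left; rw [← h]; abel
    · right; left; rw [← h]; abel
    · right; right; left; rw [← h]; abel
    · right; right; right; rw [← h]; abel
  · rintro (h | h | h | h)
    · subst h; exact torus_adj_add hk u _ (Or.inl rfl)
    · subst h; exact torus_adj_sub hk u _ (Or.inl rfl)
    · subst h; exact torus_adj_add hk u _ (Or.inr rfl)
    · subst h; exact torus_adj_sub hk u _ (Or.inr rfl)

lemma neg_e1_ne (hk : 3 ≤ k) : -((1,0) : ZMod k × ZMod k) ≠ (1,0) := by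
  intro h
  have h1 : (-1 : ZMod k) = 1 := congrArg Prod.fst h
  apply zmod_two_ne_zero hk
  have : (1 : ZMod k) + 1 = 0 := by
    nth_rewrite 1 [← h1]; abel
  rw [← this]; norm_num

lemma neg_e2_ne (hk : 3 ≤ k) : -((0,1) : ZMod k × ZMod k) ≠ (0,1) := by
  intro h
  have h1 : (-1 : ZMod k) = 1 := congrArg Prod.snd h
  apply zmod_two_ne_zero hk
  have : (1 : ZMod k) + 1 = 0 := by
    nth_rewrite 1 [← h1]; abel
  rw [← this]; norm_num

lemma torus_card_filter (hk : 3 ≤ k) (u : ZMod k × ZMod k) :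
    (Finset.univ.filter (fun v => (torus k).Adj u v)).card = 4 := by
  rw [torus_filter hk u]
  have key : ∀ x y : ZMod k × ZMod k, x ≠ y → u + x ≠ u + y := by
    intro x y h hc
    exact h (by simpa using hc)
  have h10 : ((1,0) : ZMod k × ZMod k) ≠ -(1,0) := fun h => neg_e1_ne hk h.symm
  have h1 : ((1,0) : ZMod k × ZMod k) ≠ (0,1) := by
    intro h; exact zmod_one_ne_zero hk (congrArg Prod.snd h).symm
  have h2 : ((1,0) : ZMod k × ZMod k) ≠ -(0,1) := by
    intro h
    have h' := congrArg Prod.fst h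
    simp only [Prod.fst_neg, neg_zero] at h'
    exact zmod_one_ne_zero hk h'
  have h3 : (-(1,0) : ZMod k × ZMod k) ≠ (0,1) := by
    intro h
    have h' := congrArg Prod.snd h
    simp only [Prod.snd_neg, neg_zero] at h'
    exact zmod_one_ne_zero hk h'.symm
  have h4 : (-(1,0) : ZMod k × ZMod k) ≠ -(0,1) := by
    intro h
    have h' := congrArg Prod.snd h
    simp only [Prod.snd_neg, neg_zero] at h'
    have h'' := congrArg Neg.neg h'
    simp only [neg_neg, neg_zero] at h''
    exact zmod_one_ne_zero hk h''.symm
  have h5 : ((0,1) : ZMod k × ZMod k) ≠ -(0,1) := fun h => neg_e2_ne hk h.symm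
  have e1 : u - (1,0) = u + -(1,0) := by rw [sub_eq_add_neg]
  have e2 : u - (0,1) = u + -(0,1) := by rw [sub_eq_add_neg]
  rw [e1, e2]
  rw [Finset.card_insert_of_notMem, Finset.card_insert_of_notMem,
    Finset.card_insert_of_notMem, Finset.card_singleton]
  · simp only [Finset.mem_singleton]
    exact key _ _ h5
  · simp only [Finset.mem_insert, Finset.mem_singleton]
    push_neg
    exact ⟨key _ _ h3, key _ _ h4⟩
  · simp only [Finset.mem_insert, Finset.mem_singleton]
    push_neg
    exact ⟨key _ _ h10, key _ _ h1, key _ _ h2⟩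

lemma torus_inner_sum (hk : 3 ≤ k) (u : ZMod k × ZMod k) :
    ∑ v : ZMod k × ZMod k, (if (torus k).Adj u v then effRes (torus k) u v else 0)
      = 4 * effRes (torus k) 0 (1, 0) := by
  have hstep : ∀ v : ZMod k × ZMod k,
      (if (torus k).Adj u v then effRes (torus k) u v else 0)
      = (if (torus k).Adj u v then effRes (torus k) 0 (1,0) else 0) := by
    intro v
    by_cases h : (torus k).Adj u v
    · rw [if_pos h, if_pos h, torus_edge_val hk u v h]
    · rw [if_neg h, if_neg h]
  rw [Finset.sum_congr rfl (fun v _ => hstep v), ← Finset.sum_filter]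
  rw [Finset.sum_const, torus_card_filter hk u]
  simp

lemma torus_card (hk : 3 ≤ k) : (Fintype.card (ZMod k × ZMod k) : ℝ) = (k : ℝ) * (k : ℝ) := by
  rw [Fintype.card_prod, ZMod.card]
  push_cast
  ring

lemma torus_r0 (hk : 3 ≤ k) :
    effRes (torus k) 0 (1, 0) = ((k : ℝ) * (k : ℝ) - 1) / (2 * ((k : ℝ) * (k : ℝ))) := by
  have hf := foster (torus k) (torus_preconnected hk)
  rw [Finset.sum_congr rfl (fun u _ => torus_inner_sum hk u), Finset.sum_const,
    Finset.card_univ, nsmul_eq_mul, torus_card hk] at hf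
  have hkpos : (0 : ℝ) < (k : ℝ) := by
    have : 0 < k := by omega
    exact_mod_cast this
  field_simp
  nlinarith [hf]

lemma torus_edge_ge (hk : 3 ≤ k) (u v : ZMod k × ZMod k) (h : (torus k).Adj u v) :
    effRes (torus k) u v = ((k : ℝ) * (k : ℝ) - 1) / (2 * ((k : ℝ) * (k : ℝ))) := by
  rw [torus_edge_val hk u v h, torus_r0 hk]
end T2


section Grid
variable {m n : ℕ}

def iota (k : ℕ) (p : Fin m × Fin n) : ZMod k × ZMod k :=
  ((p.1.val : ZMod k), (p.2.val : ZMod k))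

lemma iota_inj (k : ℕ) [NeZero k] (hmk : m ≤ k) (hnk : n ≤ k) :
    Function.Injective (iota (m := m) (n := n) k) := by
  intro a b hab
  have h1 : ((a.1.val : ℕ) : ZMod k) = ((b.1.val : ℕ) : ZMod k) := congrArg Prod.fst hab
  have h2 : ((a.2.val : ℕ) : ZMod k) = ((b.2.val : ℕ) : ZMod k) := congrArg Prod.snd hab
  have e1 : a.1.val = b.1.val := by
    have := congrArg ZMod.val h1
    rwa [ZMod.val_cast_of_lt (by omega), ZMod.val_cast_of_lt (by omega)] at this
  have e2 : a.2.val = b.2.val := by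
    have := congrArg ZMod.val h2
    rwa [ZMod.val_cast_of_lt (by omega), ZMod.val_cast_of_lt (by omega)] at this
  exact Prod.ext (Fin.ext e1) (Fin.ext e2)

lemma iota_adj (k : ℕ) [NeZero k] (hmk : m ≤ k) (hnk : n ≤ k)
    (u v : Fin m × Fin n) (h : (grid m n).Adj u v) :
    (torus k).Adj (iota k u) (iota k v) := by
  have hne : iota k u ≠ iota k v := fun hc => h.ne (iota_inj k hmk hnk hc)
  refine ⟨hne, ?_⟩
  rw [grid, SimpleGraph.boxProd_adj] at h
  rcases h with ⟨hp, he⟩ | ⟨hp, he⟩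
  · rw [SimpleGraph.pathGraph_adj] at hp
    rcases hp with hp | hp
    · left
      have hc : ((v.1.val : ℕ) : ZMod k) = ((u.1.val : ℕ) : ZMod k) + 1 := by
        rw [← hp]; push_cast; ring
      show iota k v - iota k u = (1, 0)
      rw [iota, iota, Prod.mk_sub_mk, hc, he]
      simp
    · right; left
      have hc : ((u.1.val : ℕ) : ZMod k) = ((v.1.val : ℕ) : ZMod k) + 1 := by
        rw [← hp]; push_cast; ring
      show iota k u - iota k v = (1, 0)
      rw [iota, iota, Prod.mk_sub_mk, hc, he]
      simp
  · rw [SimpleGraph.pathGraph_adj] at hp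
    rcases hp with hp | hp
    · right; right; left
      have hc : ((v.2.val : ℕ) : ZMod k) = ((u.2.val : ℕ) : ZMod k) + 1 := by
        rw [← hp]; push_cast; ring
      show iota k v - iota k u = (0, 1)
      rw [iota, iota, Prod.mk_sub_mk, hc, he]
      simp
    · right; right; right
      have hc : ((u.2.val : ℕ) : ZMod k) = ((v.2.val : ℕ) : ZMod k) + 1 := by
        rw [← hp]; push_cast; ring
      show iota k u - iota k v = (0, 1)
      rw [iota, iota, Prod.mk_sub_mk, hc, he]
      simp

lemma grid_preconnected (hm : 3 ≤ m) (hn : 3 ≤ n) : (grid m n).Preconnected := by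
  obtain ⟨m', rfl⟩ : ∃ m', m = m' + 1 := ⟨m - 1, by omega⟩
  obtain ⟨n', rfl⟩ : ∃ n', n = n' + 1 := ⟨n - 1, by omega⟩
  exact (SimpleGraph.connected_boxProd.mpr
    ⟨SimpleGraph.pathGraph_connected m', SimpleGraph.pathGraph_connected n'⟩).preconnected

lemma grid_edge_half (hm : 3 ≤ m) (hn : 3 ≤ n) (x y : Fin m × Fin n)
    (h : (grid m n).Adj x y) : 1/2 ≤ effRes (grid m n) x y := by
  haveI : Nonempty (Fin m × Fin n) := ⟨(⟨0, by omega⟩, ⟨0, by omega⟩)⟩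
  by_contra hlt
  push_neg at hlt
  set ε := 1/2 - effRes (grid m n) x y with hε
  have hεpos : 0 < ε := by rw [hε]; linarith
  obtain ⟨k0, hk0⟩ := exists_nat_gt (1/ε)
  set k := max (max m n) (max k0 3) with hkdef
  haveI : NeZero k := ⟨by omega⟩
  have hk3 : 3 ≤ k := by omega
  have hmk : m ≤ k := by omega
  have hnk : n ≤ k := by omega
  have hk0k : k0 ≤ k := by omega
  have hmono := effRes_mono (grid m n) (torus k)
    (grid_preconnected hm hn) (torus_preconnected hk3)
    (iota k) (iota_inj k hmk hnk) (iota_adj k hmk hnk) x y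
  rw [torus_edge_ge hk3 _ _ (iota_adj k hmk hnk x y h)] at hmono
  -- (k*k - 1)/(2*k*k) ≤ effRes grid < 1/2 - ε? derive contradiction
  have hkpos : (0:ℝ) < (k:ℝ) := by
    have : 0 < k := by omega
    exact_mod_cast this
  have hk0r : (1:ℝ)/ε < (k0 : ℝ) := hk0
  have hkbig : (1:ℝ)/ε < (k:ℝ) := by
    have : (k0 : ℝ) ≤ (k : ℝ) := by exact_mod_cast hk0k
    linarith
  have hinv : 1/(k:ℝ) < ε := by
    rw [div_lt_iff₀ hkpos]
    have h2 := hkbig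
    rw [div_lt_iff₀ hεpos] at h2
    nlinarith [h2, hεpos, hkpos]
  have hform : ((k : ℝ) * (k : ℝ) - 1) / (2 * ((k : ℝ) * (k : ℝ))) = 1/2 - 1/(2*((k:ℝ)*(k:ℝ))) := by
    field_simp
  rw [hform] at hmono
  have hkk : 1/(2*((k:ℝ)*(k:ℝ))) ≤ 1/(k:ℝ) := by
    apply one_div_le_one_div_of_le hkpos
    have hk3r : (3:ℝ) ≤ (k:ℝ) := by exact_mod_cast hk3
    nlinarith [hkpos, hk3r]
  have hfin : effRes (grid m n) x y ≥ 1/2 - 1/(k:ℝ) := by linarith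
  linarith [hfin, hinv, hε.le, hε.ge]
end Grid


theorem grid_interior_curv_nonpos (m n : ℕ) (hm : 3 ≤ m) (hn : 3 ≤ n)
    (v : Fin m × Fin n) (h1 : 0 < v.1.val) (h2 : v.1.val < m - 1)
    (h3 : 0 < v.2.val) (h4 : v.2.val < n - 1) :
    curv (grid m n) v ≤ 0 := by
  haveI : Nonempty (Fin m × Fin n) := ⟨(⟨0, by omega⟩, ⟨0, by omega⟩)⟩
  set S := ∑ y : Fin m × Fin n, if (grid m n).Adj v y then effRes (grid m n) v y else 0 with hS
  have hterm : ∀ y, (if (grid m n).Adj v y then (1:ℝ)/2 else 0)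
      ≤ (if (grid m n).Adj v y then effRes (grid m n) v y else 0) := by
    intro y
    by_cases h : (grid m n).Adj v y
    · rw [if_pos h, if_pos h]; exact grid_edge_half hm hn v y h
    · rw [if_neg h, if_neg h]
  have hsum1 : ∑ y : Fin m × Fin n, (if (grid m n).Adj v y then (1:ℝ)/2 else 0) ≤ S :=
    Finset.sum_le_sum (fun y _ => hterm y)
  have hhalf : ∑ y : Fin m × Fin n, (if (grid m n).Adj v y then (1:ℝ)/2 else 0)
      = ((Finset.univ.filter (fun y => (grid m n).Adj v y)).card : ℝ) * (1/2) := by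
    rw [← Finset.sum_filter, Finset.sum_const, nsmul_eq_mul]
  -- the four neighbours
  have hm1 : v.1.val - 1 < m := by omega
  have hm2 : v.1.val + 1 < m := by omega
  have hn1 : v.2.val - 1 < n := by omega
  have hn2 : v.2.val + 1 < n := by omega
  set a1 : Fin m := ⟨v.1.val - 1, hm1⟩ with ha1
  set a2 : Fin m := ⟨v.1.val + 1, hm2⟩ with ha2
  set b1 : Fin n := ⟨v.2.val - 1, hn1⟩ with hb1
  set b2 : Fin n := ⟨v.2.val + 1, hn2⟩ with hb2
  have hadj1 : (grid m n).Adj v (a1, v.2) := by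
    rw [grid, SimpleGraph.boxProd_adj]
    left
    refine ⟨?_, rfl⟩
    rw [SimpleGraph.pathGraph_adj]
    right
    simp [ha1]
    omega
  have hadj2 : (grid m n).Adj v (a2, v.2) := by
    rw [grid, SimpleGraph.boxProd_adj]
    left
    refine ⟨?_, rfl⟩
    rw [SimpleGraph.pathGraph_adj]
    left
    simp [ha2]
  have hadj3 : (grid m n).Adj v (v.1, b1) := by
    rw [grid, SimpleGraph.boxProd_adj]
    right
    refine ⟨?_, rfl⟩
    rw [SimpleGraph.pathGraph_adj]
    right
    simp [hb1]
    omega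
  have hadj4 : (grid m n).Adj v (v.1, b2) := by
    rw [grid, SimpleGraph.boxProd_adj]
    right
    refine ⟨?_, rfl⟩
    rw [SimpleGraph.pathGraph_adj]
    left
    simp [hb2]
  set S4 : Finset (Fin m × Fin n) := {(a1, v.2), (a2, v.2), (v.1, b1), (v.1, b2)} with hS4
  have hsub : S4 ⊆ Finset.univ.filter (fun y => (grid m n).Adj v y) := by
    intro y hy
    rw [Finset.mem_filter]
    refine ⟨Finset.mem_univ _, ?_⟩
    rw [hS4] at hy
    simp only [Finset.mem_insert, Finset.mem_singleton] at hy
    rcases hy with h | h | h | h <;> subst h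
    · exact hadj1
    · exact hadj2
    · exact hadj3
    · exact hadj4
  have hcard4 : S4.card = 4 := by
    rw [hS4]
    rw [Finset.card_insert_of_notMem, Finset.card_insert_of_notMem,
      Finset.card_insert_of_notMem, Finset.card_singleton]
    · simp only [Finset.mem_singleton, Prod.mk.injEq, ha1, ha2, hb1, hb2, Fin.ext_iff]
      omega
    · simp only [Finset.mem_insert, Finset.mem_singleton, Prod.mk.injEq, ha1, ha2, hb1, hb2,
        Fin.ext_iff]
      omega
    · simp only [Finset.mem_insert, Finset.mem_singleton, Prod.mk.injEq, ha1, ha2, hb1, hb2,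
        Fin.ext_iff]
      omega
  have hcardge : 4 ≤ (Finset.univ.filter (fun y => (grid m n).Adj v y)).card := by
    rw [← hcard4]
    exact Finset.card_le_card hsub
  have hcargeR : (4:ℝ) ≤ ((Finset.univ.filter (fun y => (grid m n).Adj v y)).card : ℝ) := by
    exact_mod_cast hcardge
  have hS2 : (2:ℝ) ≤ S := by
    rw [hhalf] at hsum1
    linarith
  have hcurv : curv (grid m n) v = 1 - (1/2) * S := by rw [hS, curv]
  rw [hcurv]
  linarith
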